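/- For every integer n ≥ 2: if 0 ≤ x < 1 then k_n(x, 0) − k_n(x, π/n) ≥ 0, and if x > 1 then k_n(x, 0) − k_n(x, π/n) ≤ 0. -/

import Mathlib

/-- `δ_n = (1/(4n))·∑_{l=1}^{n−1} 1/sin(πl/n) − 1`. -/
noncomputable def deltaN (n : ℕ) : ℝ :=
  (1 / (4 * (n : ℝ))) * ∑ l ∈ Finset.Icc 1 (n - 1), 1 / Real.sin (Real.pi * l / n) - 1

/-- `h_n(x,θ) = (1/n)·∑_{l=1}^{n} (1 − x·cos(2πl/n + θ))/(1 + x² − 2x·cos(2πl/n + θ))^{3/2}`. -/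
noncomputable def hN (n : ℕ) (x θ : ℝ) : ℝ :=
  (1 / (n : ℝ)) * ∑ l ∈ Finset.Icc 1 n,
    (1 - x * Real.cos (2 * Real.pi * l / n + θ)) /
      (1 + x ^ 2 - 2 * x * Real.cos (2 * Real.pi * l / n + θ)) ^ ((3 : ℝ) / 2)

/-- `k_n(x,θ) = h_n(x,θ) − 1`. -/
noncomputable def kN (n : ℕ) (x θ : ℝ) : ℝ := hN n x θ - 1


open Finset Complex



noncomputable def bet (a : ℕ) : ℝ := (Nat.centralBinom a : ℝ) / 4 ^ a

noncomputable def gam (b : ℕ) : ℝ := (2 * b + 1) * bet b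

lemma bet_pos (a : ℕ) : 0 < bet a :=
  div_pos (by exact_mod_cast Nat.centralBinom_pos a) (by positivity)

lemma bet_nonneg (a : ℕ) : 0 ≤ bet a := (bet_pos a).le

lemma gam_pos (b : ℕ) : 0 < gam b := by
  have := bet_pos b
  have : (0:ℝ) < 2 * b + 1 := by positivity
  unfold gam
  nlinarith [bet_pos b]

lemma bet_zero : bet 0 = 1 := by simp [bet, Nat.centralBinom]

lemma gam_zero : gam 0 = 1 := by simp [gam, bet_zero]

lemma bet_rec (k : ℕ) : (2 * (k:ℝ) + 2) * bet (k + 1) = (2 * k + 1) * bet k := by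
  have h := Nat.succ_mul_centralBinom_succ k
  have h' : ((k : ℝ) + 1) * (Nat.centralBinom (k+1) : ℝ)
      = 2 * (2 * k + 1) * (Nat.centralBinom k : ℝ) := by exact_mod_cast h
  unfold bet
  rw [pow_succ]
  have h4 : (0:ℝ) < 4 ^ k := by positivity
  field_simp
  ring_nf
  ring_nf at h'
  nlinarith [h', h4, sq_nonneg ((4:ℝ)^k)]

lemma bet_le_one (a : ℕ) : bet a ≤ 1 := by
  induction a with
  | zero => simp [bet_zero]
  | succ k ih =>
    have h := bet_rec k
    nlinarith [bet_pos k, bet_pos (k+1)]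

lemma bet_le_gam (b : ℕ) : bet b ≤ gam b := by
  unfold gam
  nlinarith [bet_pos b]

lemma gam_sub (b : ℕ) : gam (b + 1) - gam b = bet (b + 1) := by
  unfold gam
  have h := bet_rec b
  push_cast
  nlinarith [h]

/-- symmetry sum : `∑ k β_k β_{m-k} = m/2 · s m`. -/
lemma bet_conv_sym (m : ℕ) :
    (∑ k ∈ range (m + 1), (k : ℝ) * (bet k * bet (m - k)))
      = (m : ℝ) / 2 * ∑ k ∈ range (m + 1), bet k * bet (m - k) := by
  set L := ∑ k ∈ range (m + 1), (k : ℝ) * (bet k * bet (m - k)) with hL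
  have hrefl := Finset.sum_range_reflect (fun k => (k : ℝ) * (bet k * bet (m - k))) (m + 1)
  have key : L = ∑ k ∈ range (m + 1), ((m : ℝ) - k) * (bet k * bet (m - k)) := by
    rw [hL, ← hrefl]
    apply Finset.sum_congr rfl
    intro j hj
    simp only [Finset.mem_range] at hj
    have hj' : j ≤ m := by omega
    rw [show m + 1 - 1 - j = m - j from by omega, show m - (m - j) = j from by omega]
    rw [Nat.cast_sub hj']
    ring
  have : L + L = (m : ℝ) * ∑ k ∈ range (m + 1), bet k * bet (m - k) := by
    nth_rewrite 2 [key]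
    rw [hL, ← Finset.sum_add_distrib, Finset.mul_sum]
    apply Finset.sum_congr rfl
    intro j hj
    ring
  linarith

/-- Convolution identity : `∑_{k=0}^n β_k β_{n-k} = 1`. -/
lemma bet_conv (n : ℕ) : ∑ k ∈ range (n + 1), bet k * bet (n - k) = 1 := by
  induction n with
  | zero => simp [bet_zero]
  | succ n ih =>
    have E1 : (∑ k ∈ range (n + 2), 2 * (k : ℝ) * (bet k * bet (n + 1 - k)))
        = ((n : ℝ) + 1) * ∑ k ∈ range (n + 2), bet k * bet (n + 1 - k) := by
      have := bet_conv_sym (n + 1)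
      push_cast at this ⊢
      rw [show (n:ℕ) + 1 + 1 = n + 2 from rfl] at this
      calc (∑ k ∈ range (n + 2), 2 * (k : ℝ) * (bet k * bet (n + 1 - k)))
          = 2 * ∑ k ∈ range (n + 2), (k : ℝ) * (bet k * bet (n + 1 - k)) := by
            rw [Finset.mul_sum]; apply Finset.sum_congr rfl; intro j hj; ring
        _ = ((n : ℝ) + 1) * ∑ k ∈ range (n + 2), bet k * bet (n + 1 - k) := by
            rw [this]; push_cast; ring
    have E2 : (∑ k ∈ range (n + 2), 2 * (k : ℝ) * (bet k * bet (n + 1 - k)))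
        = ∑ j ∈ range (n + 1), (2 * (j:ℝ) + 1) * (bet j * bet (n - j)) := by
      rw [Finset.sum_range_succ' (fun k => 2 * (k : ℝ) * (bet k * bet (n + 1 - k))) (n+1)]
      simp only [Nat.cast_zero, mul_zero, zero_mul, add_zero]
      apply Finset.sum_congr rfl
      intro j hj
      simp only [Finset.mem_range] at hj
      have h1 : n + 1 - (j + 1) = n - j := by omega
      rw [h1]
      have h := bet_rec j
      push_cast
      linear_combination bet (n - j) * h
    have E3 : (∑ j ∈ range (n + 1), (2 * (j:ℝ) + 1) * (bet j * bet (n - j)))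
        = ((n : ℝ) + 1) * ∑ j ∈ range (n + 1), bet j * bet (n - j) := by
      have := bet_conv_sym n
      calc (∑ j ∈ range (n + 1), (2 * (j:ℝ) + 1) * (bet j * bet (n - j)))
          = 2 * (∑ j ∈ range (n + 1), (j:ℝ) * (bet j * bet (n - j)))
            + ∑ j ∈ range (n + 1), bet j * bet (n - j) := by
            rw [Finset.mul_sum, ← Finset.sum_add_distrib]
            apply Finset.sum_congr rfl; intro j hj; ring
        _ = ((n : ℝ) + 1) * ∑ j ∈ range (n + 1), bet j * bet (n - j) := by
            rw [this]; ring
    have hpos : (0:ℝ) < (n : ℝ) + 1 := by positivity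
    have := E1.symm.trans (E2.trans E3)
    rw [ih] at this
    have := mul_left_cancel₀ hpos.ne' this
    simpa using this

noncomputable def Pc (z : ℂ) : ℂ := ∑' a, (bet a : ℂ) * z ^ a
noncomputable def Qc (z : ℂ) : ℂ := ∑' b, (gam b : ℂ) * z ^ b

lemma summable_bet_norm {z : ℂ} (hz : ‖z‖ < 1) :
    Summable (fun a => ‖(bet a : ℂ) * z ^ a‖) := by
  apply Summable.of_nonneg_of_le (fun a => norm_nonneg _)
    (fun a => ?_) (summable_geometric_of_lt_one (norm_nonneg z) hz)
  rw [norm_mul, norm_pow]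
  have h1 : ‖(bet a : ℂ)‖ = bet a := by
    rw [Complex.norm_real, Real.norm_of_nonneg (bet_pos a).le]
  rw [h1]
  have := bet_le_one a
  have h2 : (0:ℝ) ≤ ‖z‖ ^ a := by positivity
  nlinarith

lemma summable_gam_norm {z : ℂ} (hz : ‖z‖ < 1) :
    Summable (fun b => ‖(gam b : ℂ) * z ^ b‖) := by
  have hgeo : Summable (fun b : ℕ => 2 * ((b:ℝ) * ‖z‖ ^ b) + ‖z‖ ^ b) := by
    apply Summable.add
    · exact (Summable.mul_left 2 (by
        simpa using summable_pow_mul_geometric_of_norm_lt_one 1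
          (r := ‖z‖) (by rwa [Real.norm_of_nonneg (norm_nonneg z)])))
    · exact summable_geometric_of_lt_one (norm_nonneg z) hz
  apply Summable.of_nonneg_of_le (fun a => norm_nonneg _) (fun b => ?_) hgeo
  rw [norm_mul, norm_pow]
  have h1 : ‖(gam b : ℂ)‖ = gam b := by
    rw [Complex.norm_real, Real.norm_of_nonneg (gam_pos b).le]
  rw [h1]
  have h2 : gam b ≤ 2 * b + 1 := by
    have := bet_le_one b
    have := bet_pos b
    unfold gam
    nlinarith
  have h3 : (0:ℝ) ≤ ‖z‖ ^ b := by positivity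
  nlinarith

lemma hasSum_Pc {z : ℂ} (hz : ‖z‖ < 1) :
    HasSum (fun a => (bet a : ℂ) * z ^ a) (Pc z) :=
  ((summable_bet_norm hz).of_norm).hasSum

lemma hasSum_Qc {z : ℂ} (hz : ‖z‖ < 1) :
    HasSum (fun b => (gam b : ℂ) * z ^ b) (Qc z) :=
  ((summable_gam_norm hz).of_norm).hasSum

lemma Pc_conj {z : ℂ} (hz : ‖z‖ < 1) :
    Pc ((starRingEnd ℂ) z) = (starRingEnd ℂ) (Pc z) := by
  have h1 := (hasSum_Pc hz).star
  have h2 : HasSum (fun a => (bet a : ℂ) * ((starRingEnd ℂ) z) ^ a)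
      ((starRingEnd ℂ) (Pc z)) := by
    convert h1 using 2 with a
    rw [star_mul', star_pow]
    rw [show star ((bet a : ℂ)) = (bet a : ℂ) from by
      simp [Complex.star_def, Complex.conj_ofReal]]
    rfl
    rfl
  have hz' : ‖(starRingEnd ℂ) z‖ < 1 := by
    rw [show ‖(starRingEnd ℂ) z‖ = ‖z‖ from norm_star z]; exact hz
  exact (hasSum_Pc hz').unique h2

lemma Qc_conj {z : ℂ} (hz : ‖z‖ < 1) :
    Qc ((starRingEnd ℂ) z) = (starRingEnd ℂ) (Qc z) := by
  have h1 := (hasSum_Qc hz).star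
  have h2 : HasSum (fun b => (gam b : ℂ) * ((starRingEnd ℂ) z) ^ b)
      ((starRingEnd ℂ) (Qc z)) := by
    convert h1 using 2 with b
    rw [star_mul', star_pow]
    rw [show star ((gam b : ℂ)) = (gam b : ℂ) from by
      simp [Complex.star_def, Complex.conj_ofReal]]
    rfl
    rfl
  have hz' : ‖(starRingEnd ℂ) z‖ < 1 := by
    rw [show ‖(starRingEnd ℂ) z‖ = ‖z‖ from norm_star z]; exact hz
  exact (hasSum_Qc hz').unique h2

lemma Pc_sq {z : ℂ} (hz : ‖z‖ < 1) : (1 - z) * (Pc z) ^ 2 = 1 := by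
  have hb := summable_bet_norm hz
  have key : Pc z * Pc z = ∑' n : ℕ, ∑ k ∈ range (n + 1),
      ((bet k : ℂ) * z ^ k) * ((bet (n - k) : ℂ) * z ^ (n - k)) := by
    unfold Pc
    exact tsum_mul_tsum_eq_tsum_sum_range_of_summable_norm hb hb
  have inner : ∀ n : ℕ, (∑ k ∈ range (n + 1),
      ((bet k : ℂ) * z ^ k) * ((bet (n - k) : ℂ) * z ^ (n - k))) = z ^ n := by
    intro n
    have : (∑ k ∈ range (n + 1),
        ((bet k : ℂ) * z ^ k) * ((bet (n - k) : ℂ) * z ^ (n - k)))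
        = (∑ k ∈ range (n + 1), ((bet k : ℝ) * bet (n - k) : ℝ)) * z ^ n := by
      push_cast
      rw [Finset.sum_mul]
      apply Finset.sum_congr rfl
      intro k hk
      simp only [Finset.mem_range] at hk
      rw [show ((bet k : ℂ)) * z ^ k * ((bet (n-k) : ℂ) * z ^ (n - k))
          = (bet k : ℂ) * (bet (n-k) : ℂ) * (z ^ k * z ^ (n - k)) from by ring,
        ← pow_add, show k + (n - k) = n from by omega]
    rw [this, bet_conv n]
    simp
  have geo : (∑' n : ℕ, z ^ n) = (1 - z)⁻¹ := (hasSum_geometric_of_norm_lt_one hz).tsum_eq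
  have hne : (1 : ℂ) - z ≠ 0 := by
    intro h
    have : z = 1 := by linear_combination -h
    rw [this] at hz; simp at hz
  have : Pc z * Pc z = (1 - z)⁻¹ := by
    rw [key]
    rw [tsum_congr inner, geo]
  rw [pow_two, this]
  field_simp

lemma Qc_rel {z : ℂ} (hz : ‖z‖ < 1) : (1 - z) * Qc z = Pc z := by
  have hQ := hasSum_Qc hz
  have h1 : HasSum (fun b => z * ((gam b : ℂ) * z ^ b)) (z * Qc z) := hQ.mul_left z
  have h2 : HasSum (fun b => (gam b : ℂ) * z ^ (b + 1)) (z * Qc z) := by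
    convert h1 using 2 with b; ring
  set g : ℕ → ℂ := fun b => if b = 0 then 0 else (gam (b - 1) : ℂ) * z ^ b with hg
  have h3 : HasSum g (z * Qc z) := by
    have h2' : HasSum (fun b => g (b + 1)) (z * Qc z) := by
      convert h2 using 2 with b
      simp [hg]
    have := (hasSum_nat_add_iff (f := g) 1).mp h2'
    simpa [hg] using this

  have h4 : HasSum (fun b => (gam b : ℂ) * z ^ b - g b) (Qc z - z * Qc z) := hQ.sub h3
  have h5 : (fun b => (gam b : ℂ) * z ^ b - g b) = (fun b => (bet b : ℂ) * z ^ b) := by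
    funext b
    cases b with
    | zero => simp [hg, gam_zero, bet_zero]
    | succ m =>
      simp only [hg]
      rw [if_neg (Nat.succ_ne_zero m)]
      have := gam_sub m
      have hc : (gam (m+1) : ℂ) - (gam m : ℂ) = (bet (m+1) : ℂ) := by
        exact_mod_cast congrArg (fun r : ℝ => (r : ℂ)) this
      simp only [Nat.add_sub_cancel]
      linear_combination (z : ℂ)^(m+1) * hc
  rw [h5] at h4
  have := (hasSum_Pc hz).unique h4
  linear_combination -this

noncomputable def zpt (u φ : ℝ) : ℂ := (u : ℂ) * Complex.exp ((φ : ℂ) * Complex.I)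

lemma zpt_norm (u φ : ℝ) (hu : 0 ≤ u) : ‖zpt u φ‖ = u := by
  unfold zpt
  rw [norm_mul, Complex.norm_exp_ofReal_mul_I]
  simp only [Complex.norm_real, Real.norm_eq_abs, mul_one]
  exact abs_of_nonneg hu

lemma zpt_re (u φ : ℝ) : (zpt u φ).re = u * Real.cos φ := by
  unfold zpt
  rw [Complex.exp_mul_I, Complex.re_ofReal_mul]
  simp [← Complex.ofReal_cos, ← Complex.ofReal_sin]

lemma D_eq (u φ : ℝ) : Complex.normSq (1 - zpt u φ) = 1 + u ^ 2 - 2 * u * Real.cos φ := by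
  have h1 : (1 - zpt u φ).re = 1 - u * Real.cos φ := by
    rw [Complex.sub_re, zpt_re]; simp
  have h2 : (1 - zpt u φ).im = -(u * Real.sin φ) := by
    unfold zpt
    rw [Complex.sub_im, Complex.exp_mul_I]
    simp [← Complex.ofReal_cos, ← Complex.ofReal_sin]
  rw [Complex.normSq_apply, h1, h2]
  have := Real.sin_sq_add_cos_sq φ
  ring_nf
  nlinarith [this]

lemma D_pos (u φ : ℝ) (hu0 : 0 ≤ u) (hu : u ≠ 1) :
    0 < 1 + u ^ 2 - 2 * u * Real.cos φ := by
  have h1 : Real.cos φ ≤ 1 := Real.cos_le_one φ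
  have h3 : (0:ℝ) < (1 - u)^2 := by
    have : (1:ℝ) - u ≠ 0 := fun hc => hu (by linarith)
    positivity
  nlinarith

lemma znorm_lt (u φ : ℝ) (hu0 : 0 ≤ u) (hu1 : u < 1) : ‖zpt u φ‖ < 1 := by
  rw [zpt_norm u φ hu0]; exact hu1

lemma conj_znorm_lt (u φ : ℝ) (hu0 : 0 ≤ u) (hu1 : u < 1) :
    ‖(starRingEnd ℂ) (zpt u φ)‖ < 1 := by
  rw [show ‖(starRingEnd ℂ) (zpt u φ)‖ = ‖zpt u φ‖ from norm_star _]
  exact znorm_lt u φ hu0 hu1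

/-- `|P|² = D^(-1/2)`. -/
lemma P_mod (u φ : ℝ) (hu0 : 0 ≤ u) (hu1 : u < 1) :
    Complex.normSq (Pc (zpt u φ))
      = (1 + u ^ 2 - 2 * u * Real.cos φ) ^ (-(1:ℝ)/2) := by
  set z := zpt u φ with hz
  have hzn : ‖z‖ < 1 := znorm_lt u φ hu0 hu1
  set D : ℝ := 1 + u ^ 2 - 2 * u * Real.cos φ with hD
  have hDpos : 0 < D := D_pos u φ hu0 (by linarith)
  have hDz : Complex.normSq (1 - z) = D := D_eq u φ
  set t : ℝ := Complex.normSq (Pc z) with ht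
  have htn : 0 ≤ t := Complex.normSq_nonneg _
  -- t² = D⁻¹
  have hsq : t ^ 2 = D⁻¹ := by
    have h1 : (1 - z) ≠ 0 := by
      intro h
      have : z = 1 := by linear_combination -h
      rw [this] at hzn; simp at hzn
    have hP2 : (Pc z) ^ 2 = (1 - z)⁻¹ := by
      have := Pc_sq hzn
      field_simp
      linear_combination this
    have : (t : ℂ) ^ 2 = ((D : ℝ) : ℂ)⁻¹ := by
      have e1 : (t : ℂ) = Pc z * (starRingEnd ℂ) (Pc z) := (Complex.mul_conj _).symm
      rw [e1]
      have : (Pc z * (starRingEnd ℂ) (Pc z)) ^ 2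
          = (Pc z) ^ 2 * (starRingEnd ℂ) ((Pc z) ^ 2) := by
        rw [map_pow]; ring
      rw [this, hP2, map_inv₀, ← hDz]
      rw [show (starRingEnd ℂ) (1 - z) = (starRingEnd ℂ) 1 - (starRingEnd ℂ) z from map_sub _ _ _]
      rw [map_one]
      rw [← mul_inv]
      congr 1
      rw [← Complex.mul_conj (1 - z), map_sub, map_one]
    exact_mod_cast this
  -- conclude t = D^(-1/2)
  have hr : (D ^ (-(1:ℝ)/2)) ^ 2 = D⁻¹ := by
    rw [← Real.rpow_natCast (D ^ (-(1:ℝ)/2)) 2, ← Real.rpow_mul hDpos.le]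
    norm_num
    exact Real.rpow_neg_one D
  have hrn : 0 ≤ D ^ (-(1:ℝ)/2) := Real.rpow_nonneg hDpos.le _
  have := Real.sqrt_sq htn
  rw [← Real.sqrt_sq htn, ← Real.sqrt_sq hrn, hsq, hr]

/-- `|Q|² = D^(-3/2)`. -/
lemma Q_mod (u φ : ℝ) (hu0 : 0 ≤ u) (hu1 : u < 1) :
    Complex.normSq (Qc (zpt u φ))
      = (1 + u ^ 2 - 2 * u * Real.cos φ) ^ (-(3:ℝ)/2) := by
  set z := zpt u φ with hz
  have hzn : ‖z‖ < 1 := znorm_lt u φ hu0 hu1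
  set D : ℝ := 1 + u ^ 2 - 2 * u * Real.cos φ with hD
  have hDpos : 0 < D := D_pos u φ hu0 (by linarith)
  have hDz : Complex.normSq (1 - z) = D := D_eq u φ
  have h1 : (1 - z) ≠ 0 := by
    intro h
    have : z = 1 := by linear_combination -h
    rw [this] at hzn; simp at hzn
  have hQ : Qc z = (1 - z)⁻¹ * Pc z := by
    have := Qc_rel hzn
    field_simp
    linear_combination this
  rw [hQ, Complex.normSq_mul, Complex.normSq_inv, hDz, P_mod u φ hu0 hu1]
  rw [show (-(3:ℝ)/2) = (-1) + (-(1:ℝ)/2) by norm_num, Real.rpow_add hDpos]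
  rw [Real.rpow_neg_one]

/-- real part formula for the hN integrand. -/
lemma re_PQ (u φ : ℝ) (hu0 : 0 ≤ u) (hu1 : u < 1) :
    (1 - u * Real.cos φ) / (1 + u ^ 2 - 2 * u * Real.cos φ) ^ ((3:ℝ)/2)
      = (Pc (zpt u φ) * (starRingEnd ℂ) (Qc (zpt u φ))).re := by
  set z := zpt u φ with hz
  have hzn : ‖z‖ < 1 := znorm_lt u φ hu0 hu1
  set D : ℝ := 1 + u ^ 2 - 2 * u * Real.cos φ with hD
  have hDpos : 0 < D := D_pos u φ hu0 (by linarith)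
  have key : Pc z * (starRingEnd ℂ) (Qc z) = (1 - z) * (Complex.normSq (Qc z) : ℂ) := by
    rw [← Qc_rel hzn, ← Complex.mul_conj (Qc z)]
    ring
  rw [key, Q_mod u φ hu0 hu1]
  have hre : ((1 - z) * ((D ^ (-(3:ℝ)/2) : ℝ) : ℂ)).re = (1 - u * Real.cos φ) * D ^ (-(3:ℝ)/2) := by
    rw [mul_comm, Complex.re_ofReal_mul]
    rw [show (1 - z).re = 1 - u * Real.cos φ by rw [Complex.sub_re, zpt_re]; simp]
    ring
  rw [hre]
  rw [show (-(3:ℝ)/2) = -((3:ℝ)/2) by norm_num, Real.rpow_neg hDpos.le]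
  rw [div_eq_mul_inv]

/-- real part formula for the Sn integrand. -/
lemma re_PP (u φ : ℝ) (hu0 : 0 ≤ u) (hu1 : u < 1) :
    (1 + u ^ 2 - 2 * u * Real.cos φ) ^ (-(1:ℝ)/2)
      = (Pc (zpt u φ) * (starRingEnd ℂ) (Pc (zpt u φ))).re := by
  rw [Complex.mul_conj, ← P_mod u φ hu0 hu1]
  simp

/-- Sum of n-th roots of unity powers over `Icc 1 n`. -/
lemma sum_exp_root (n : ℕ) (hn : 1 ≤ n) (m : ℤ) :
    ∑ l ∈ Icc 1 n, Complex.exp ((m : ℂ) * (2 * Real.pi * (l : ℝ) / n : ℝ) * Complex.I)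
      = if (n:ℤ) ∣ m then (n : ℂ) else 0 := by
  have hnc : (n : ℂ) ≠ 0 := Nat.cast_ne_zero.mpr (by omega)
  set ζ : ℂ := Complex.exp ((m : ℂ) * (2 * (Real.pi : ℂ) / n) * Complex.I) with hζ
  have hterm : ∀ l : ℕ, Complex.exp ((m : ℂ) * (2 * Real.pi * (l : ℝ) / n : ℝ) * Complex.I)
      = ζ ^ l := by
    intro l
    rw [hζ, ← Complex.exp_nat_mul]
    congr 1
    push_cast
    ring
  have hζn : ζ ^ n = 1 := by
    rw [hζ, ← Complex.exp_nat_mul]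
    rw [show (n : ℂ) * ((m : ℂ) * (2 * (Real.pi : ℂ) / n) * Complex.I)
        = (m : ℂ) * (2 * (Real.pi:ℂ) * Complex.I) from by field_simp]
    exact Complex.exp_int_mul_two_pi_mul_I m
  by_cases hdvd : (n:ℤ) ∣ m
  · obtain ⟨j, hj⟩ := hdvd
    have hζ1 : ζ = 1 := by
      rw [hζ, hj]
      rw [show ((((n:ℤ) * j : ℤ)) : ℂ) * (2 * (Real.pi : ℂ) / n) * Complex.I
          = (j : ℂ) * (2 * (Real.pi:ℂ) * Complex.I) from by push_cast; field_simp]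

      exact Complex.exp_int_mul_two_pi_mul_I j
    rw [if_pos ⟨j, hj⟩]
    calc ∑ l ∈ Icc 1 n, Complex.exp ((m : ℂ) * (2 * Real.pi * (l : ℝ) / n : ℝ) * Complex.I)
        = ∑ l ∈ Icc 1 n, (1:ℂ) := by
          apply Finset.sum_congr rfl; intro l _; rw [hterm l, hζ1, one_pow]
      _ = (n : ℂ) := by simp
  · have hζne : ζ ≠ 1 := by
      intro h
      rw [hζ, Complex.exp_eq_one_iff] at h
      obtain ⟨k, hk⟩ := h
      have hx : (2 * (Real.pi:ℂ) * Complex.I) ≠ 0 := by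
        apply mul_ne_zero (mul_ne_zero two_ne_zero ?_) Complex.I_ne_zero
        simpa [Complex.ofReal_eq_zero] using Real.pi_ne_zero
      have h2 : (m:ℂ) * (2*(Real.pi:ℂ)/n) * Complex.I * n
          = (k:ℂ) * (2*(Real.pi:ℂ)*Complex.I) * n := by rw [hk]
      have h3 : (m:ℂ) * (2*(Real.pi:ℂ)*Complex.I) = ((k:ℂ)*n) * (2*(Real.pi:ℂ)*Complex.I) := by
        field_simp [hnc] at h2
        linear_combination (2*(Real.pi:ℂ)*Complex.I) * h2
      have hm : (m : ℂ) = (k : ℂ) * n := mul_right_cancel₀ hx h3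
      have : m = k * n := by exact_mod_cast hm
      exact hdvd ⟨k, by linarith [this]⟩
    rw [if_neg hdvd]
    calc ∑ l ∈ Icc 1 n, Complex.exp ((m : ℂ) * (2 * Real.pi * (l : ℝ) / n : ℝ) * Complex.I)
        = ∑ l ∈ Icc 1 n, ζ ^ l := Finset.sum_congr rfl (fun l _ => hterm l)
      _ = ∑ i ∈ range n, ζ ^ (1 + i) := by
          rw [show Icc 1 n = Ico 1 (n+1) from rfl, Finset.sum_Ico_eq_sum_range]
          simp
      _ = ζ * ∑ i ∈ range n, ζ ^ i := by
          rw [Finset.mul_sum]; apply Finset.sum_congr rfl; intro i _; rw [pow_add, pow_one]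
      _ = 0 := by
          rw [geom_sum_eq hζne, hζn]
          simp

lemma zpt_pow (u φ : ℝ) (a b : ℕ) :
    (zpt u φ) ^ a * ((starRingEnd ℂ) (zpt u φ)) ^ b
      = ((u ^ (a + b) : ℝ) : ℂ)
        * Complex.exp ((((a:ℤ) - (b:ℤ) : ℤ) : ℂ) * (φ : ℂ) * Complex.I) := by
  unfold zpt
  rw [map_mul, Complex.conj_ofReal, ← Complex.exp_conj]
  rw [show (starRingEnd ℂ) ((φ:ℂ) * Complex.I) = -((φ:ℂ) * Complex.I) from by
    simp [Complex.conj_ofReal]]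
  rw [mul_pow, mul_pow, ← Complex.exp_nat_mul, ← Complex.exp_nat_mul]
  rw [mul_mul_mul_comm, ← Complex.ofReal_pow, ← Complex.ofReal_pow, ← Complex.ofReal_mul,
    ← pow_add, ← Complex.exp_add]
  congr 1
  push_cast
  ring

lemma re_sum' {s : Finset ℕ} (f : ℕ → ℂ) : (∑ i ∈ s, f i).re = ∑ i ∈ s, (f i).re :=
  Complex.re_sum s f

/-- The main summation engine. -/
lemma engine (n : ℕ) (hn : 1 ≤ n) (u θ : ℝ) (hu0 : 0 ≤ u) (hu1 : u < 1)
    (d : ℕ → ℝ) (Gd : ℂ → ℂ)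
    (hdsum : ∀ w : ℂ, ‖w‖ < 1 → HasSum (fun b => (d b : ℂ) * w ^ b) (Gd w))
    (hdnorm : ∀ w : ℂ, ‖w‖ < 1 → Summable (fun b => ‖(d b : ℂ) * w ^ b‖))
    (F : ℝ → ℝ)
    (hF : ∀ φ : ℝ, F φ = (Pc (zpt u φ) * (starRingEnd ℂ) (Gd (zpt u φ))).re) :
    HasSum (fun p : ℕ × ℕ => bet p.1 * d p.2 * u ^ (p.1 + p.2) *
        (if (n:ℤ) ∣ ((p.1:ℤ) - (p.2:ℤ)) then Real.cos ((((p.1:ℤ) - (p.2:ℤ)) : ℝ) * θ) else 0))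
      ((1 / (n:ℝ)) * ∑ l ∈ Icc 1 n, F (2 * Real.pi * l / n + θ)) := by
  have hnR : ((n:ℝ)) ≠ 0 := Nat.cast_ne_zero.mpr (by omega)
  -- conjugation identity for Gd
  have hGconj : ∀ w : ℂ, ‖w‖ < 1 → Gd ((starRingEnd ℂ) w) = (starRingEnd ℂ) (Gd w) := by
    intro w hw
    have h1 := (hdsum w hw).star
    have h2 : HasSum (fun b => (d b : ℂ) * ((starRingEnd ℂ) w) ^ b)
        ((starRingEnd ℂ) (Gd w)) := by
      convert h1 using 2 with b
      rw [star_mul', star_pow]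
      rw [show star ((d b : ℂ)) = (d b : ℂ) from by
        simp [Complex.star_def, Complex.conj_ofReal]]
      rfl
      rfl
    have hw' : ‖(starRingEnd ℂ) w‖ < 1 := by
      rw [show ‖(starRingEnd ℂ) w‖ = ‖w‖ from norm_star w]; exact hw
    exact (hdsum _ hw').unique h2
  -- per-l product HasSum
  set φl : ℕ → ℝ := fun l => 2 * Real.pi * l / n + θ with hφl
  have hper : ∀ l ∈ Icc 1 n,
      HasSum (fun p : ℕ × ℕ => ((bet p.1 : ℂ) * (zpt u (φl l)) ^ p.1)
          * ((d p.2 : ℂ) * ((starRingEnd ℂ) (zpt u (φl l))) ^ p.2))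
        (Pc (zpt u (φl l)) * (starRingEnd ℂ) (Gd (zpt u (φl l)))) := by
    intro l _
    set z := zpt u (φl l) with hzdef
    have hzn : ‖z‖ < 1 := znorm_lt u (φl l) hu0 hu1
    have hzcn : ‖(starRingEnd ℂ) z‖ < 1 := by
      rw [show ‖(starRingEnd ℂ) z‖ = ‖z‖ from norm_star z]; exact hzn
    have hf := summable_bet_norm hzn
    have hg := hdnorm _ hzcn
    have hs := summable_mul_of_summable_norm hf hg
    have ht := tsum_mul_tsum_of_summable_norm hf hg
    have hval : (∑' a, (bet a : ℂ) * z ^ a) = Pc z := (hasSum_Pc hzn).tsum_eq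
    have hval2 : (∑' b, (d b : ℂ) * ((starRingEnd ℂ) z) ^ b)
        = (starRingEnd ℂ) (Gd z) := by
      rw [(hdsum _ hzcn).tsum_eq, hGconj z hzn]
    have := hs.hasSum
    rwa [← ht, hval, hval2] at this
  -- sum over l
  have hsum := hasSum_sum hper
  -- rewrite the lhs function
  have hfun : ∀ p : ℕ × ℕ,
      (∑ l ∈ Icc 1 n, ((bet p.1 : ℂ) * (zpt u (φl l)) ^ p.1)
          * ((d p.2 : ℂ) * ((starRingEnd ℂ) (zpt u (φl l))) ^ p.2))
      = ((bet p.1 * d p.2 * u ^ (p.1 + p.2) : ℝ) : ℂ)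
          * Complex.exp (((((p.1:ℤ) - (p.2:ℤ)) : ℝ) * θ : ℝ) * Complex.I)
          * (if (n:ℤ) ∣ ((p.1:ℤ) - (p.2:ℤ)) then (n : ℂ) else 0) := by
    intro p
    obtain ⟨a, b⟩ := p
    set m : ℤ := (a:ℤ) - (b:ℤ) with hm
    have hterm : ∀ l : ℕ, ((bet a : ℂ) * (zpt u (φl l)) ^ a)
        * ((d b : ℂ) * ((starRingEnd ℂ) (zpt u (φl l))) ^ b)
        = ((bet a * d b * u ^ (a + b) : ℝ) : ℂ)
          * Complex.exp ((((m:ℝ) * θ : ℝ)) * Complex.I)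
          * Complex.exp ((m : ℂ) * ((2 * Real.pi * (l:ℝ) / n : ℝ) : ℂ) * Complex.I) := by
      intro l
      have h1 : ((bet a : ℂ) * (zpt u (φl l)) ^ a)
          * ((d b : ℂ) * ((starRingEnd ℂ) (zpt u (φl l))) ^ b)
          = (bet a : ℂ) * (d b : ℂ) *
            ((zpt u (φl l)) ^ a * ((starRingEnd ℂ) (zpt u (φl l))) ^ b) := by ring
      rw [h1, zpt_pow]
      rw [show ((m : ℤ) : ℂ) * ((φl l : ℝ) : ℂ) * Complex.I
          = (((m:ℝ) * θ : ℝ) : ℂ) * Complex.I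
            + (m : ℂ) * ((2 * Real.pi * (l:ℝ) / n : ℝ) : ℂ) * Complex.I from by
        rw [hφl]
        push_cast
        ring]
      rw [Complex.exp_add]
      push_cast
      ring
    rw [Finset.sum_congr rfl (fun l _ => hterm l)]
    rw [← Finset.mul_sum]
    rw [sum_exp_root n hn m]
    rw [hm]
    push_cast
    ring
  have hsum2 : HasSum (fun p : ℕ × ℕ =>
      ((bet p.1 * d p.2 * u ^ (p.1 + p.2) : ℝ) : ℂ)
        * Complex.exp (((((p.1:ℤ) - (p.2:ℤ)) : ℝ) * θ : ℝ) * Complex.I)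
        * (if (n:ℤ) ∣ ((p.1:ℤ) - (p.2:ℤ)) then (n : ℂ) else 0))
      (∑ l ∈ Icc 1 n, Pc (zpt u (φl l)) * (starRingEnd ℂ) (Gd (zpt u (φl l)))) := by
    have := hsum
    simp only [hfun] at this
    exact this
  -- take real parts
  have hre := Complex.hasSum_re hsum2
  have hre2 : HasSum (fun p : ℕ × ℕ =>
      bet p.1 * d p.2 * u ^ (p.1 + p.2) *
        (if (n:ℤ) ∣ ((p.1:ℤ) - (p.2:ℤ))
          then Real.cos ((((p.1:ℤ) - (p.2:ℤ)) : ℝ) * θ) * n else 0))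
      (∑ l ∈ Icc 1 n, F (φl l)) := by
    have heq : ∀ p : ℕ × ℕ,
        (((bet p.1 * d p.2 * u ^ (p.1 + p.2) : ℝ) : ℂ)
          * Complex.exp (((((p.1:ℤ) - (p.2:ℤ)) : ℝ) * θ : ℝ) * Complex.I)
          * (if (n:ℤ) ∣ ((p.1:ℤ) - (p.2:ℤ)) then (n : ℂ) else 0)).re
        = bet p.1 * d p.2 * u ^ (p.1 + p.2) *
          (if (n:ℤ) ∣ ((p.1:ℤ) - (p.2:ℤ))
            then Real.cos ((((p.1:ℤ) - (p.2:ℤ)) : ℝ) * θ) * n else 0) := by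
      intro p
      by_cases hdvd : (n:ℤ) ∣ ((p.1:ℤ) - (p.2:ℤ))
      · rw [if_pos hdvd, if_pos hdvd]
        rw [show ((bet p.1 * d p.2 * u ^ (p.1 + p.2) : ℝ) : ℂ)
              * Complex.exp (((((p.1:ℤ) - (p.2:ℤ)) : ℝ) * θ : ℝ) * Complex.I) * (n : ℂ)
            = (((bet p.1 * d p.2 * u ^ (p.1 + p.2)) * (n:ℝ) : ℝ) : ℂ)
              * Complex.exp (((((p.1:ℤ) - (p.2:ℤ)) : ℝ) * θ : ℝ) * Complex.I) from by
          push_cast; ring]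
        rw [Complex.re_ofReal_mul, Complex.exp_ofReal_mul_I_re]
        ring
      · rw [if_neg hdvd, if_neg hdvd]
        simp
    have hval : (∑ l ∈ Icc 1 n, Pc (zpt u (φl l))
        * (starRingEnd ℂ) (Gd (zpt u (φl l)))).re = ∑ l ∈ Icc 1 n, F (φl l) := by
      rw [re_sum']
      apply Finset.sum_congr rfl
      intro l _
      rw [hF (φl l)]
    rw [← hval]
    have := hre
    simp only [heq] at this
    exact this
  have hfinal := hre2.mul_left (1 / (n:ℝ))
  have heq2 : ∀ p : ℕ × ℕ,
      (1 / (n:ℝ)) * (bet p.1 * d p.2 * u ^ (p.1 + p.2) *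
        (if (n:ℤ) ∣ ((p.1:ℤ) - (p.2:ℤ))
          then Real.cos ((((p.1:ℤ) - (p.2:ℤ)) : ℝ) * θ) * n else 0))
      = bet p.1 * d p.2 * u ^ (p.1 + p.2) *
        (if (n:ℤ) ∣ ((p.1:ℤ) - (p.2:ℤ))
          then Real.cos ((((p.1:ℤ) - (p.2:ℤ)) : ℝ) * θ) else 0) := by
    intro p
    by_cases hdvd : (n:ℤ) ∣ ((p.1:ℤ) - (p.2:ℤ))
    · rw [if_pos hdvd, if_pos hdvd]
      field_simp
    · rw [if_neg hdvd, if_neg hdvd]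
      simp
  simp only [heq2] at hfinal
  exact hfinal

/-- auxiliary: the "S" sampled sum with exponent -1/2. -/
noncomputable def sN (n : ℕ) (x θ : ℝ) : ℝ :=
  (1 / (n : ℝ)) * ∑ l ∈ Finset.Icc 1 n,
    (1 + x ^ 2 - 2 * x * Real.cos (2 * Real.pi * l / n + θ)) ^ (-(1 : ℝ) / 2)

/-- weights. -/
noncomputable def wgt (n : ℕ) (p : ℕ × ℕ) : ℝ :=
  if (n:ℤ) ∣ ((p.1:ℤ) - (p.2:ℤ))
    then 1 - Real.cos ((((p.1:ℤ) - (p.2:ℤ)) : ℝ) * (Real.pi / n)) else 0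

lemma wgt_nonneg (n : ℕ) (p : ℕ × ℕ) : 0 ≤ wgt n p := by
  unfold wgt
  split
  · have := Real.cos_le_one ((((p.1:ℤ) - (p.2:ℤ)) : ℝ) * (Real.pi / n))
    linarith
  · exact le_refl 0

lemma hasSum_hdiff (n : ℕ) (hn : 1 ≤ n) (u : ℝ) (hu0 : 0 ≤ u) (hu1 : u < 1) :
    HasSum (fun p : ℕ × ℕ => bet p.1 * gam p.2 * u ^ (p.1 + p.2) * wgt n p)
      (hN n u 0 - hN n u (Real.pi / n)) := by
  set F : ℝ → ℝ := fun φ => (1 - u * Real.cos φ) /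
      (1 + u ^ 2 - 2 * u * Real.cos φ) ^ ((3:ℝ)/2) with hFdef
  have hF : ∀ φ : ℝ, F φ = (Pc (zpt u φ) * (starRingEnd ℂ) (Qc (zpt u φ))).re :=
    fun φ => re_PQ u φ hu0 hu1
  have h0 := engine n hn u 0 hu0 hu1 gam Qc (fun w hw => hasSum_Qc hw)
    (fun w hw => summable_gam_norm hw) F hF
  have hπ := engine n hn u (Real.pi / n) hu0 hu1 gam Qc (fun w hw => hasSum_Qc hw)
    (fun w hw => summable_gam_norm hw) F hF
  have hval0 : (1 / (n:ℝ)) * ∑ l ∈ Finset.Icc 1 n, F (2 * Real.pi * l / n + 0) = hN n u 0 := rfl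
  have hvalπ : (1 / (n:ℝ)) * ∑ l ∈ Finset.Icc 1 n, F (2 * Real.pi * l / n + Real.pi / n)
      = hN n u (Real.pi / n) := rfl
  rw [hval0] at h0
  rw [hvalπ] at hπ
  have := h0.sub hπ
  convert this using 2 with p
  · rfl
  unfold wgt
  by_cases hdvd : (n:ℤ) ∣ ((p.1:ℤ) - (p.2:ℤ))
  · rw [if_pos hdvd, if_pos hdvd, if_pos hdvd]
    rw [mul_zero, Real.cos_zero]
    ring
  · rw [if_neg hdvd, if_neg hdvd, if_neg hdvd]
    ring

lemma hasSum_sdiff (n : ℕ) (hn : 1 ≤ n) (u : ℝ) (hu0 : 0 ≤ u) (hu1 : u < 1) :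
    HasSum (fun p : ℕ × ℕ => bet p.1 * bet p.2 * u ^ (p.1 + p.2) * wgt n p)
      (sN n u 0 - sN n u (Real.pi / n)) := by
  set F : ℝ → ℝ := fun φ => (1 + u ^ 2 - 2 * u * Real.cos φ) ^ (-(1:ℝ)/2) with hFdef
  have hF : ∀ φ : ℝ, F φ = (Pc (zpt u φ) * (starRingEnd ℂ) (Pc (zpt u φ))).re :=
    fun φ => re_PP u φ hu0 hu1
  have h0 := engine n hn u 0 hu0 hu1 bet Pc (fun w hw => hasSum_Pc hw)
    (fun w hw => summable_bet_norm hw) F hF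
  have hπ := engine n hn u (Real.pi / n) hu0 hu1 bet Pc (fun w hw => hasSum_Pc hw)
    (fun w hw => summable_bet_norm hw) F hF
  have hval0 : (1 / (n:ℝ)) * ∑ l ∈ Finset.Icc 1 n, F (2 * Real.pi * l / n + 0) = sN n u 0 := rfl
  have hvalπ : (1 / (n:ℝ)) * ∑ l ∈ Finset.Icc 1 n, F (2 * Real.pi * l / n + Real.pi / n)
      = sN n u (Real.pi / n) := rfl
  rw [hval0] at h0
  rw [hvalπ] at hπ
  have := h0.sub hπ
  convert this using 2 with p
  · rfl
  unfold wgt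
  by_cases hdvd : (n:ℤ) ∣ ((p.1:ℤ) - (p.2:ℤ))
  · rw [if_pos hdvd, if_pos hdvd, if_pos hdvd]
    rw [mul_zero, Real.cos_zero]
    ring
  · rw [if_neg hdvd, if_neg hdvd, if_neg hdvd]
    ring

/-- pointwise inversion identity for `x > 1`. -/
lemma invert_pt (x φ : ℝ) (hx : 1 < x) :
    (1 - x * Real.cos φ) / (1 + x ^ 2 - 2 * x * Real.cos φ) ^ ((3:ℝ)/2)
      = (1/x) * ((1 + (1/x) ^ 2 - 2 * (1/x) * Real.cos φ) ^ (-(1:ℝ)/2)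
          - (1 - (1/x) * Real.cos φ)
              / (1 + (1/x) ^ 2 - 2 * (1/x) * Real.cos φ) ^ ((3:ℝ)/2)) := by
  have hx0 : (0:ℝ) < x := by linarith
  set u : ℝ := 1/x with hu
  have hu0 : 0 ≤ u := by positivity
  have hu1 : u < 1 := by rw [hu]; rw [div_lt_one hx0]; linarith
  set c : ℝ := Real.cos φ with hc
  have hDu : 0 < 1 + u ^ 2 - 2 * u * c := D_pos u φ hu0 (by linarith)
  set Du : ℝ := 1 + u ^ 2 - 2 * u * c with hDu'
  have hDx : 1 + x ^ 2 - 2 * x * c = x ^ 2 * Du := by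
    rw [hDu', hu]
    field_simp
    ring
  have hA : 0 < Du ^ ((3:ℝ)/2) := Real.rpow_pos_of_pos hDu _
  have hPow : (1 + x ^ 2 - 2 * x * c) ^ ((3:ℝ)/2) = x ^ 3 * Du ^ ((3:ℝ)/2) := by
    rw [hDx, Real.mul_rpow (by positivity) hDu.le]
    congr 1
    rw [← Real.rpow_natCast x 2, ← Real.rpow_mul hx0.le, ← Real.rpow_natCast x 3]
    norm_num
  have hDu12 : Du ^ (-(1:ℝ)/2) = Du / Du ^ ((3:ℝ)/2) := by
    rw [eq_div_iff hA.ne', ← Real.rpow_add hDu]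
    norm_num
  have hrhsub : Du ^ (-(1:ℝ)/2) - (1 - u * c) / Du ^ ((3:ℝ)/2)
      = (u ^ 2 - u * c) / Du ^ ((3:ℝ)/2) := by
    rw [hDu12, div_sub_div_same]
    congr 1
    rw [hDu']
    ring
  rw [hPow, hrhsub]
  rw [show (1/x) * ((u ^ 2 - u * c) / Du ^ ((3:ℝ)/2))
      = (u ^ 2 - u * c) / (x * Du ^ ((3:ℝ)/2)) from by
    rw [div_mul_div_comm, one_mul]]
  rw [div_eq_div_iff (by positivity) (by positivity)]
  rw [hu]
  field_simp


/-- inversion for the sampled sums. -/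
lemma hN_invert (n : ℕ) (x θ : ℝ) (hx : 1 < x) :
    hN n x θ = (1/x) * (sN n (1/x) θ - hN n (1/x) θ) := by
  unfold hN sN
  rw [← mul_sub, ← Finset.sum_sub_distrib, mul_left_comm]
  conv_rhs => rw [Finset.mul_sum]
  congr 1
  apply Finset.sum_congr rfl
  intro l _
  exact invert_pt x (2 * Real.pi * l / n + θ) hx

/-- `k_n(x,0) − k_n(x,π/n)` is `≥ 0` on `[0,1)` and `≤ 0` on `(1,∞)`. -/
theorem kN_diff_sign (n : ℕ) (hn : 2 ≤ n) (x : ℝ) :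
    (0 ≤ x → x < 1 → 0 ≤ kN n x 0 - kN n x (Real.pi / n)) ∧
    (1 < x → kN n x 0 - kN n x (Real.pi / n) ≤ 0) := by
  have hn1 : 1 ≤ n := by omega
  have hkh : ∀ y : ℝ, kN n y 0 - kN n y (Real.pi / n) = hN n y 0 - hN n y (Real.pi / n) := by
    intro y; unfold kN; ring
  constructor
  · intro hx0 hx1
    rw [hkh]
    have h := hasSum_hdiff n hn1 x hx0 hx1
    refine hasSum_le (fun p => ?_) hasSum_zero h
    have := wgt_nonneg n p
    have := bet_pos p.1
    have := gam_pos p.2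
    have hup : (0:ℝ) ≤ x ^ (p.1 + p.2) := by positivity
    positivity
  · intro hx
    rw [hkh]
    have hx0 : (0:ℝ) < x := by linarith
    set u : ℝ := 1/x with hu
    have hu0 : 0 ≤ u := by positivity
    have hu1 : u < 1 := by rw [hu, div_lt_one hx0]; linarith
    have hinv0 := hN_invert n x 0 hx
    have hinvπ := hN_invert n x (Real.pi / n) hx
    have hdiff : hN n x 0 - hN n x (Real.pi / n)
        = (1/x) * ((sN n u 0 - sN n u (Real.pi / n)) - (hN n u 0 - hN n u (Real.pi / n))) := by
      rw [hinv0, hinvπ, ← hu]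
      ring
    rw [hdiff]
    have hS := hasSum_sdiff n hn1 u hu0 hu1
    have hH := hasSum_hdiff n hn1 u hu0 hu1
    have hsub := hS.sub hH
    have hle : (sN n u 0 - sN n u (Real.pi / n)) - (hN n u 0 - hN n u (Real.pi / n)) ≤ 0 := by
      refine hasSum_le (fun p => ?_) hsub hasSum_zero
      have hw := wgt_nonneg n p
      have hb1 := bet_pos p.1
      have hbg := bet_le_gam p.2
      have hup : (0:ℝ) ≤ u ^ (p.1 + p.2) := by positivity
      have : bet p.1 * bet p.2 * u ^ (p.1 + p.2) * wgt n p
          ≤ bet p.1 * gam p.2 * u ^ (p.1 + p.2) * wgt n p := by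
        apply mul_le_mul_of_nonneg_right _ hw
        apply mul_le_mul_of_nonneg_right _ hup
        exact mul_le_mul_of_nonneg_left hbg hb1.le
      linarith
    have hxinv : (0:ℝ) ≤ 1/x := by positivity
    exact mul_nonpos_of_nonneg_of_nonpos hxinv hle
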